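/- For any finite sets 𝒳, 𝒴, any distribution μ on 𝒳×𝒴 and any distribution λ on 𝒳×𝒴 with supp(λ) ⊆ supp(μ), one has crent^μ_𝒳(λ) + crent^μ_𝒴(λ) ≤ 2·S∞(λ||μ). -/

import Mathlib

open scoped BigOperators ENNReal
open Classical

noncomputable section

/-- `p` is a probability distribution on the finite type `α`. -/
def IsDist {α : Type*} [Fintype α] (p : α → ℝ) : Prop :=
  (∀ a, 0 ≤ p a) ∧ ∑ a, p a = 1

/-- Relative entropy (base 2) `S(p‖q)`. -/
def relEnt {α : Type*} [Fintype α] (p q : α → ℝ) : ℝ :=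
  ∑ a, if 0 < p a then p a * Real.logb 2 (p a / q a) else 0

/-- Relative min-entropy `S∞(p‖q) = max_{a : p a > 0} log (p a / q a)`. -/
def relMinEnt {α : Type*} [Fintype α] (p q : α → ℝ) : ℝ :=
  sSup {r | ∃ a, 0 < p a ∧ r = Real.logb 2 (p a / q a)}

/-- Marginal on the first component. -/
def margX {α β : Type*} [Fintype α] [Fintype β] (p : α × β → ℝ) : α → ℝ :=
  fun x => ∑ y, p (x, y)

/-- Marginal on the second component. -/
def margY {α β : Type*} [Fintype α] [Fintype β] (p : α × β → ℝ) : β → ℝ :=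
  fun y => ∑ x, p (x, y)

/-- Conditional distribution of the second component given the first equals `x`. -/
def condY {α β : Type*} [Fintype α] [Fintype β] (p : α × β → ℝ) (x : α) : β → ℝ :=
  fun y => p (x, y) / margX p x

/-- Conditional distribution of the first component given the second equals `y`. -/
def condX {α β : Type*} [Fintype α] [Fintype β] (p : α × β → ℝ) (y : β) : α → ℝ :=
  fun x => p (x, y) / margY p y

/-- `crent^μ_𝒳(λ) = E_{x←X₁} S((Y₁)_x ‖ Y_x)`. -/
def crentX {α β : Type*} [Fintype α] [Fintype β] (lam mu : α × β → ℝ) : ℝ :=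
  ∑ x, margX lam x * relEnt (condY lam x) (condY mu x)

/-- `crent^μ_𝒴(λ) = E_{y←Y₁} S((X₁)_y ‖ X_y)`. -/
def crentY {α β : Type*} [Fintype α] [Fintype β] (lam mu : α × β → ℝ) : ℝ :=
  ∑ y, margY lam y * relEnt (condX lam y) (condX mu y)

/-- `λ` is one-way for `μ` with respect to `𝒳`: `λ(y|x) = μ(y|x)` on the support of `λ`. -/
def OneWayX {α β : Type*} [Fintype α] [Fintype β] (lam mu : α × β → ℝ) : Prop :=
  ∀ x y, 0 < lam (x, y) → condY lam x y = condY mu x y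

/-- `λ` is one-way for `μ` with respect to `𝒴`: `λ(x|y) = μ(x|y)` on the support of `λ`. -/
def OneWayY {α β : Type*} [Fintype α] [Fintype β] (lam mu : α × β → ℝ) : Prop :=
  ∀ x y, 0 < lam (x, y) → condX lam y x = condX mu y x

/-- `λ` is SM-like for `μ`. -/
def SMLike {α β : Type*} [Fintype α] [Fintype β] (lam mu : α × β → ℝ) : Prop :=
  ∃ θ : α × β → ℝ, IsDist θ ∧ OneWayX θ mu ∧ OneWayY lam θ

/-- `err_{f,S}(λ) = min_{z ∈ S} Pr_{(x,y)←λ}[(x,y,z) ∉ f]`. -/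
def errRel {α β γ : Type*} [Fintype α] [Fintype β] (f : Set (α × β × γ)) (S : Set γ)
    (lam : α × β → ℝ) : ℝ :=
  sInf {e | ∃ z ∈ S, e = ∑ p : α × β, if (p.1, p.2, z) ∉ f then lam p else 0}

/-- `ess^μ(f,S) = 1 − Pr_{(x,y)←μ}[∃ z ∉ S, (x,y,z) ∈ f]`. -/
def ess {α β γ : Type*} [Fintype α] [Fintype β] (f : Set (α × β × γ)) (S : Set γ)
    (mu : α × β → ℝ) : ℝ :=
  1 - ∑ p : α × β, if ∃ z ∉ S, (p.1, p.2, z) ∈ f then mu p else 0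

/-- The two-way `ε`-error conditional relative entropy bound `crent^{2,μ}_ε(f,S)`
(`+∞` if no feasible `λ` exists). -/
def crent2 {α β γ : Type*} [Fintype α] [Fintype β] (f : Set (α × β × γ)) (S : Set γ)
    (mu : α × β → ℝ) (ε : ℝ) : ℝ≥0∞ :=
  sInf {c | ∃ lam : α × β → ℝ, IsDist lam ∧ SMLike lam mu ∧ errRel f S lam ≤ ε ∧
    c = ENNReal.ofReal (crentX lam mu + crentY lam mu)}

/-- The two-way `ε`-error relative min-entropy bound `ment^{2,μ}_ε(f,S)`
(`+∞` if no feasible `λ` exists). -/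
def ment2 {α β γ : Type*} [Fintype α] [Fintype β] (f : Set (α × β × γ)) (S : Set γ)
    (mu : α × β → ℝ) (ε : ℝ) : ℝ≥0∞ :=
  sInf {c | ∃ lam : α × β → ℝ, IsDist lam ∧ SMLike lam mu ∧ errRel f S lam ≤ ε ∧
    c = ENNReal.ofReal (relMinEnt lam mu)}

/-- The `k`-fold product distribution `μ^k` on `𝒳^k × 𝒴^k`. -/
def prodDist {α β : Type*} [Fintype α] [Fintype β] (mu : α × β → ℝ) (k : ℕ) :
    (Fin k → α) × (Fin k → β) → ℝ :=
  fun p => ∏ i, mu (p.1 i, p.2 i)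

/-- The `k`-fold product relation `f^k`. -/
def relPow {α β γ : Type*} (f : Set (α × β × γ)) (k : ℕ) :
    Set ((Fin k → α) × (Fin k → β) × (Fin k → γ)) :=
  {p | ∀ i, (p.1 i, p.2.1 i, p.2.2 i) ∈ f}


/-- Pointwise bound by the relative min-entropy. -/
lemma logb_le_relMinEnt {α : Type*} [Fintype α] (p q : α → ℝ) (a : α) (ha : 0 < p a) :
    Real.logb 2 (p a / q a) ≤ relMinEnt p q := by
  apply le_csSup
  · exact ((Set.finite_range (fun a => Real.logb 2 (p a / q a))).bddAbove).mono
      (by rintro r ⟨b, hb, rfl⟩; exact ⟨b, rfl⟩)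
  · exact ⟨a, ha, rfl⟩

lemma crentX_le_relMinEnt {α β : Type*} [Fintype α] [Fintype β]
    (lam mu : α × β → ℝ) (hlam : IsDist lam) (hmu : IsDist mu)
    (hsupp : ∀ p : α × β, 0 < lam p → 0 < mu p) :
    crentX lam mu ≤ relMinEnt lam mu := by
  have hlog2 : (0:ℝ) < Real.log 2 := Real.log_pos one_lt_two
  set M := relMinEnt lam mu with hMdef
  have key : ∀ x, margX lam x * relEnt (condY lam x) (condY mu x) ≤
      (∑ y, if 0 < lam (x,y) then lam (x,y) else 0) * M +
      (1/Real.log 2) * ((if 0 < margX lam x then margX mu x else 0) - margX lam x) := by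
    intro x
    by_cases h0 : 0 < margX lam x
    · have hLne : margX lam x ≠ 0 := ne_of_gt h0
      obtain ⟨y₀, hy₀⟩ : ∃ y, 0 < lam (x, y) := by
        by_contra hc
        push_neg at hc
        have : margX lam x ≤ 0 := Finset.sum_nonpos (fun y _ => hc y)
        linarith
      have hMX : 0 < margX mu x := by
        have h1 : mu (x, y₀) ≤ margX mu x :=
          Finset.single_le_sum (f := fun y => mu (x,y)) (fun y _ => hmu.1 (x,y))
            (Finset.mem_univ y₀)
        exact lt_of_lt_of_le (hsupp _ hy₀) h1
      have hstep : ∀ y, (if 0 < condY lam x y then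
            margX lam x * (condY lam x y * Real.logb 2 (condY lam x y / condY mu x y)) else 0) ≤
          (if 0 < lam (x,y) then lam (x,y) else 0) * M +
          (if 0 < lam (x,y) then lam (x,y) else 0) *
            Real.logb 2 (margX mu x / margX lam x) := by
        intro y
        by_cases hy : 0 < lam (x,y)
        · have hcond : 0 < condY lam x y := div_pos hy h0
          rw [if_pos hcond, if_pos hy]
          have hmup : 0 < mu (x,y) := hsupp _ hy
          have heq : condY lam x y / condY mu x y =
              (lam (x,y) / mu (x,y)) * (margX mu x / margX lam x) := by
            unfold condY
            field_simp
          have hlogeq : Real.logb 2 (condY lam x y / condY mu x y) =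
              Real.logb 2 (lam (x,y) / mu (x,y)) +
              Real.logb 2 (margX mu x / margX lam x) := by
            rw [heq, Real.logb_mul (by positivity) (by positivity)]
          have hmc : margX lam x * condY lam x y = lam (x,y) := by
            unfold condY; field_simp
          calc margX lam x * (condY lam x y * Real.logb 2 (condY lam x y / condY mu x y))
              = lam (x,y) * (Real.logb 2 (lam (x,y) / mu (x,y)) +
                  Real.logb 2 (margX mu x / margX lam x)) := by
                rw [← mul_assoc, hmc, hlogeq]
            _ = lam (x,y) * Real.logb 2 (lam (x,y) / mu (x,y)) +
                lam (x,y) * Real.logb 2 (margX mu x / margX lam x) := mul_add _ _ _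
            _ ≤ lam (x,y) * M +
                lam (x,y) * Real.logb 2 (margX mu x / margX lam x) := by
                have := logb_le_relMinEnt lam mu (x,y) hy
                nlinarith
        · have hy0 : lam (x,y) = 0 := le_antisymm (not_lt.1 hy) (hlam.1 (x,y))
          have hcond : condY lam x y = 0 := by unfold condY; rw [hy0, zero_div]
          rw [if_neg (by rw [hcond]; exact lt_irrefl 0), if_neg hy]
          simp
      have hsum_ite : (∑ y, if 0 < lam (x,y) then lam (x,y) else 0) = margX lam x := by
        unfold margX
        refine Finset.sum_congr rfl fun y _ => ?_
        by_cases hy : 0 < lam (x,y)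
        · simp [hy]
        · simp [hy, le_antisymm (not_lt.1 hy) (hlam.1 (x,y))]
      have hlast : margX lam x * Real.logb 2 (margX mu x / margX lam x) ≤
          (1/Real.log 2) * (margX mu x - margX lam x) := by
        have h1 : Real.log (margX mu x / margX lam x) ≤ margX mu x / margX lam x - 1 :=
          Real.log_le_sub_one_of_pos (div_pos hMX h0)
        have h2 : margX lam x * Real.log (margX mu x / margX lam x) ≤
            margX mu x - margX lam x := by
          have h3 : margX lam x * (margX mu x / margX lam x - 1) =
              margX mu x - margX lam x := by field_simp
          nlinarith
        rw [Real.logb]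
        calc margX lam x * (Real.log (margX mu x / margX lam x) / Real.log 2)
            = (margX lam x * Real.log (margX mu x / margX lam x)) * (1/Real.log 2) := by ring
          _ ≤ (margX mu x - margX lam x) * (1/Real.log 2) := by
              apply mul_le_mul_of_nonneg_right h2 (by positivity)
          _ = (1/Real.log 2) * (margX mu x - margX lam x) := by ring
      calc margX lam x * relEnt (condY lam x) (condY mu x)
          = ∑ y, (if 0 < condY lam x y then
              margX lam x * (condY lam x y * Real.logb 2 (condY lam x y / condY mu x y))
              else 0) := by
            rw [relEnt, Finset.mul_sum]
            exact Finset.sum_congr rfl fun y _ => by rw [mul_ite, mul_zero]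
        _ ≤ ∑ y, ((if 0 < lam (x,y) then lam (x,y) else 0) * M +
              (if 0 < lam (x,y) then lam (x,y) else 0) *
                Real.logb 2 (margX mu x / margX lam x)) :=
            Finset.sum_le_sum fun y _ => hstep y
        _ = (∑ y, if 0 < lam (x,y) then lam (x,y) else 0) * M +
              (∑ y, if 0 < lam (x,y) then lam (x,y) else 0) *
                Real.logb 2 (margX mu x / margX lam x) := by
            rw [Finset.sum_add_distrib, ← Finset.sum_mul, ← Finset.sum_mul]
        _ ≤ (∑ y, if 0 < lam (x,y) then lam (x,y) else 0) * M +
              (1/Real.log 2) * ((if 0 < margX lam x then margX mu x else 0) - margX lam x) := by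
            rw [if_pos h0, hsum_ite]
            exact add_le_add_right hlast _
    · have hL0 : margX lam x = 0 :=
        le_antisymm (not_lt.1 h0) (Finset.sum_nonneg fun y _ => hlam.1 (x,y))
      have hall : ∀ y, lam (x,y) = 0 := by
        intro y
        have h1 : lam (x,y) ≤ margX lam x :=
          Finset.single_le_sum (f := fun y => lam (x,y)) (fun y _ => hlam.1 (x,y))
            (Finset.mem_univ y)
        have := hlam.1 (x,y)
        linarith [hL0 ▸ h1]
      have hz : (∑ y, if 0 < lam (x,y) then lam (x,y) else 0) = 0 :=
        Finset.sum_eq_zero fun y _ => by simp [hall y]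
      rw [hz, if_neg h0, hL0]
      simp
  have hsum1 : ∑ x, (∑ y, if 0 < lam (x,y) then lam (x,y) else 0) = 1 := by
    have : ∀ x, (∑ y, if 0 < lam (x,y) then lam (x,y) else 0) = ∑ y, lam (x,y) := by
      intro x
      refine Finset.sum_congr rfl fun y _ => ?_
      by_cases hy : 0 < lam (x,y)
      · simp [hy]
      · simp [hy, le_antisymm (not_lt.1 hy) (hlam.1 (x,y))]
    simp_rw [this]
    rw [← Fintype.sum_prod_type]
    exact hlam.2
  have hsum2 : ∑ x, (if 0 < margX lam x then margX mu x else 0) ≤ 1 := by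
    calc ∑ x, (if 0 < margX lam x then margX mu x else 0) ≤ ∑ x, margX mu x := by
          apply Finset.sum_le_sum
          intro x _
          by_cases h : 0 < margX lam x
          · simp [h]
          · simp only [if_neg h]
            exact Finset.sum_nonneg fun y _ => hmu.1 (x,y)
      _ = 1 := by
          unfold margX
          rw [← Fintype.sum_prod_type]
          exact hmu.2
  have hsumL : ∑ x, margX lam x = 1 := by
    unfold margX
    rw [← Fintype.sum_prod_type]
    exact hlam.2
  calc crentX lam mu ≤ ∑ x, ((∑ y, if 0 < lam (x,y) then lam (x,y) else 0) * M +
        (1/Real.log 2) * ((if 0 < margX lam x then margX mu x else 0) - margX lam x)) :=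
        Finset.sum_le_sum fun x _ => key x
    _ = (∑ x, ∑ y, if 0 < lam (x,y) then lam (x,y) else 0) * M +
        (1/Real.log 2) * ((∑ x, (if 0 < margX lam x then margX mu x else 0)) -
          ∑ x, margX lam x) := by
        rw [Finset.sum_add_distrib, ← Finset.sum_mul, ← Finset.mul_sum,
          Finset.sum_sub_distrib]
    _ ≤ M := by
        rw [hsum1, hsumL, one_mul]
        have hnp : (1/Real.log 2) * ((∑ x, (if 0 < margX lam x then margX mu x else 0)) - 1) ≤ 0 :=
          mul_nonpos_of_nonneg_of_nonpos (by positivity) (by linarith)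
        linarith

/-- For distributions `λ, μ` on `𝒳 × 𝒴` with `supp λ ⊆ supp μ`,
`crent^μ_𝒳(λ) + crent^μ_𝒴(λ) ≤ 2 · S∞(λ‖μ)`. -/
theorem crent_le_two_relMinEnt {α β : Type*} [Fintype α] [Fintype β]
    (lam mu : α × β → ℝ) (hlam : IsDist lam) (hmu : IsDist mu)
    (hsupp : ∀ p : α × β, 0 < lam p → 0 < mu p) :
    crentX lam mu + crentY lam mu ≤ 2 * relMinEnt lam mu := by
  have h1 : crentX lam mu ≤ relMinEnt lam mu := crentX_le_relMinEnt lam mu hlam hmu hsupp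
  set lam' : β × α → ℝ := fun p => lam (p.2, p.1) with hlam'
  set mu' : β × α → ℝ := fun p => mu (p.2, p.1) with hmu'
  have hswap : ∀ (f : α × β → ℝ), ∑ p : β × α, f (p.2, p.1) = ∑ p : α × β, f p := by
    intro f
    exact Fintype.sum_equiv (Equiv.prodComm β α) _ _ (fun p => rfl)
  have hlamD : IsDist lam' := ⟨fun p => hlam.1 _, by rw [hlam']; rw [hswap lam]; exact hlam.2⟩
  have hmuD : IsDist mu' := ⟨fun p => hmu.1 _, by rw [hmu']; rw [hswap mu]; exact hmu.2⟩
  have hsupp' : ∀ p : β × α, 0 < lam' p → 0 < mu' p := fun p hp => hsupp _ hp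
  have h2 : crentX lam' mu' ≤ relMinEnt lam' mu' :=
    crentX_le_relMinEnt lam' mu' hlamD hmuD hsupp'
  have hcr : crentY lam mu = crentX lam' mu' := rfl
  have hME : relMinEnt lam' mu' = relMinEnt lam mu := by
    unfold relMinEnt
    congr 1
    ext r
    constructor
    · rintro ⟨⟨y, x⟩, hp, rfl⟩
      exact ⟨(x, y), hp, rfl⟩
    · rintro ⟨⟨x, y⟩, hp, rfl⟩
      exact ⟨(y, x), hp, rfl⟩
  rw [hcr]
  rw [hME] at h2
  linarith

end
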